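/- Let k_e > 0 and let Ω₀ : [0,∞) → ℝ³ be continuous and bounded. Let k_P > 0, let K_D ∈ ℝ^{3×3} be positive definite and symmetric, and let ε satisfy 0 < ε < min{ √k_P, 4k_P·λ_min(K_D) / (4k_P + λ_max(K_D)²) }. Then there exist constants C > 0 and λ > 0 such that every solution (Z_s, z, ω) : [0,∞) → Sym(ℝ^{3×3}) × ℝ³ × ℝ³ of the closed-loop system Ż_s = [Z_s, Ω̂₀(t)] − 2k_e Z_s, ż = z × Ω₀(t) + ω, ω̇ = −k_P z − K_D ω − ε (z × Ω₀(t)), satisfies ‖Z_s(t)‖ + ‖z(t)‖ + ‖ω(t)‖ ≤ C·e^{−λt}·(‖Z_s(0)‖ + ‖z(0)‖ + ‖ω(0)‖) for all t ≥ 0. -/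

import Mathlib

open Matrix

attribute [local instance] Matrix.frobeniusNormedAddCommGroup Matrix.frobeniusNormedSpace

noncomputable section

abbrev Mat3 := Matrix (Fin 3) (Fin 3) ℝ

/-- Frobenius inner product. -/
def finner (A B : Mat3) : ℝ := (Aᵀ * B).trace

/-- Euclidean norm on ℝ³. -/
def enorm3 (v : Fin 3 → ℝ) : ℝ := Real.sqrt (∑ i, v i ^ 2)

/-- The hat map. -/
def hat (v : Fin 3 → ℝ) : Mat3 :=
  !![0, -v 2, v 1; v 2, 0, -v 0; -v 1, v 0, 0]

/-- The vee map, inverse of the hat map on skew-symmetric matrices. -/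
def vee (A : Mat3) : Fin 3 → ℝ := ![A 2 1, A 0 2, A 1 0]

/-- The cross product on ℝ³. -/
def cross (u v : Fin 3 → ℝ) : Fin 3 → ℝ :=
  ![u 1 * v 2 - u 2 * v 1, u 2 * v 0 - u 0 * v 2, u 0 * v 1 - u 1 * v 0]

/-- Symmetrization operator. -/
def symPart (A : Mat3) : Mat3 := (2⁻¹ : ℝ) • (A + Aᵀ)

/-- Skew-symmetrization operator. -/
def skewPart (A : Mat3) : Mat3 := (2⁻¹ : ℝ) • (A - Aᵀ)

/-- `SO(3)`: rotation matrices. -/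
def SO3 : Set Mat3 := {R | Rᵀ * R = 1 ∧ 0 < R.det}

/-- The matrix commutator. -/
def mcomm (A B : Mat3) : Mat3 := A * B - B * A

/-- A real square matrix is Hurwitz if every complex eigenvalue (root of its
characteristic polynomial over ℂ) has negative real part. -/
def IsHurwitzMat {n : Type*} [Fintype n] [DecidableEq n] (M : Matrix n n ℝ) : Prop :=
  ∀ μ : ℂ, (M.map (algebraMap ℝ ℂ)).charpoly.eval μ = 0 → μ.re < 0

/-- A real polynomial is Hurwitz if all of its complex roots have negative real part. -/
def IsHurwitzPoly (p : Polynomial ℝ) : Prop :=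
  ∀ μ : ℂ, (p.map (algebraMap ℝ ℂ)).eval μ = 0 → μ.re < 0


section AuxLemmas


lemma cs3 (f g : Fin 3 → ℝ) : (∑ i, f i * g i)^2 ≤ (∑ i, f i^2) * (∑ i, g i^2) := by
  simp only [Fin.sum_univ_three]
  nlinarith [sq_nonneg (f 0 * g 1 - f 1 * g 0), sq_nonneg (f 0 * g 2 - f 2 * g 0),
    sq_nonneg (f 1 * g 2 - f 2 * g 1)]

lemma quad_key (α γ β : ℝ) (hα : 0 < α) (hγ : 0 < γ) (hδ : β^2 < 4*α*γ)
    (X Y q : ℝ) (hX : 0 ≤ X) (hY : 0 ≤ Y) (hq : q^2 ≤ β^2*(X*Y)) :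
    (4*α*γ - β^2)/(4*(α+γ)) * (X+Y) ≤ α*X + γ*Y - q := by
  set μ := (4*α*γ - β^2)/(4*(α+γ)) with hμ
  have hs : (0:ℝ) < α + γ := by linarith
  have hμdef : μ * (4*(α+γ)) = 4*α*γ - β^2 := by
    rw [hμ]; exact div_mul_cancel₀ _ (ne_of_gt (by linarith))
  have hμα : μ ≤ α := by nlinarith [sq_nonneg β]
  have hμγ : μ ≤ γ := by nlinarith [sq_nonneg β]
  have h4 : β^2 ≤ 4*(α-μ)*(γ-μ) := by nlinarith [sq_nonneg μ]
  have hP : 0 ≤ (α-μ)*X + (γ-μ)*Y := by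
    have := mul_nonneg (by linarith : (0:ℝ) ≤ α-μ) hX
    have := mul_nonneg (by linarith : (0:ℝ) ≤ γ-μ) hY
    linarith
  have hP2 : q^2 ≤ ((α-μ)*X + (γ-μ)*Y)^2 := by
    nlinarith [sq_nonneg ((α-μ)*X - (γ-μ)*Y), mul_nonneg hX hY]
  have hqP : q ≤ (α-μ)*X + (γ-μ)*Y := by nlinarith
  linarith

lemma hasDerivAt_comp_pi {f : ℝ → (Fin 3 → ℝ)} {v : Fin 3 → ℝ} {t : ℝ}
    (h : HasDerivAt f v t) (i : Fin 3) : HasDerivAt (fun s => f s i) (v i) t := by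
  have h2 := hasFDerivAt_pi'.1 h.hasFDerivAt i
  simpa using h2.hasDerivAt


lemma exp_decay {f : ℝ → ℝ} {k : ℝ}
    (hf : ∀ t, 0 ≤ t → ∃ d, HasDerivAt f d t ∧ d ≤ -k * f t) :
    ∀ t, 0 ≤ t → f t ≤ f 0 * Real.exp (-k * t) := by
  intro t ht
  set h : ℝ → ℝ := fun s => f s * Real.exp (k * s) with hh
  have hd : ∀ s, 0 ≤ s → ∃ d, HasDerivAt h d s ∧ d ≤ 0 := by
    intro s hs
    obtain ⟨d, hder, hle⟩ := hf s hs
    refine ⟨d * Real.exp (k*s) + f s * (Real.exp (k*s) * k), ?_, ?_⟩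
    · have : HasDerivAt (fun s : ℝ => Real.exp (k*s)) (Real.exp (k*s) * k) s := by
        simpa using (((hasDerivAt_id s).const_mul k).exp)
      exact hder.mul this
    · have hexp : (0:ℝ) < Real.exp (k*s) := Real.exp_pos _
      nlinarith
  have hanti : AntitoneOn h (Set.Ici 0) := by
    apply antitoneOn_of_deriv_nonpos (convex_Ici 0)
    · intro s hs
      obtain ⟨d, hder, _⟩ := hd s hs
      exact hder.continuousAt.continuousWithinAt
    · intro s hs
      rw [interior_Ici] at hs
      obtain ⟨d, hder, _⟩ := hd s (le_of_lt hs)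
      exact hder.differentiableAt.differentiableWithinAt
    · intro s hs
      rw [interior_Ici] at hs
      obtain ⟨d, hder, hle⟩ := hd s (le_of_lt hs)
      rw [hder.deriv]; exact hle
  have := hanti (Set.self_mem_Ici) ht ht
  have h0 : h 0 = f 0 := by simp [hh]
  have : f t * Real.exp (k*t) ≤ f 0 := by rw [← h0]; simpa [hh] using this
  have hexp : (0:ℝ) < Real.exp (k*t) := Real.exp_pos _
  have h2 : f 0 * Real.exp (-k*t) * Real.exp (k*t) = f 0 := by
    rw [mul_assoc, ← Real.exp_add]; ring_nf; simp
  nlinarith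


lemma frob_norm_eq (A : Mat3) : ‖A‖ = Real.sqrt (∑ i, ∑ j, (A i j)^2) := by
  rw [Matrix.frobenius_norm_def, Real.sqrt_eq_rpow]
  congr 1
  simp [Real.norm_eq_abs, sq_abs]

lemma entry_le_frob (A : Mat3) (i j : Fin 3) : |A i j| ≤ ‖A‖ := by
  rw [frob_norm_eq, ← Real.sqrt_sq_eq_abs]
  apply Real.sqrt_le_sqrt
  have h1 : (A i j)^2 ≤ ∑ j', (A i j')^2 :=
    Finset.single_le_sum (f := fun j' => (A i j')^2) (fun j' _ => sq_nonneg _) (Finset.mem_univ j)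
  have h2 : (∑ j', (A i j')^2) ≤ ∑ i', ∑ j', (A i' j')^2 :=
    Finset.single_le_sum (f := fun i' => ∑ j', (A i' j')^2) (fun i' _ => Finset.sum_nonneg fun j' _ => sq_nonneg _)
      (Finset.mem_univ i)
  linarith

def entryCLM (i j : Fin 3) : Mat3 →L[ℝ] ℝ :=
  LinearMap.mkContinuous
    { toFun := fun A => A i j
      map_add' := fun A B => rfl
      map_smul' := fun c A => rfl } 1
    (fun A => by rw [one_mul, Real.norm_eq_abs]; exact entry_le_frob A i j)

lemma hasDerivAt_entry {Z : ℝ → Mat3} {D : Mat3} {t : ℝ}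
    (h : HasDerivAt Z D t) (i j : Fin 3) :
    HasDerivAt (fun s => Z s i j) (D i j) t := by
  have := (entryCLM i j).hasFDerivAt.comp_hasDerivAt t h
  exact this

lemma finner_sum (S M : Mat3) : ∑ i, ∑ j, S i j * M i j = (Sᵀ * M).trace := by
  simp only [Matrix.trace, Matrix.diag, Matrix.mul_apply, Matrix.transpose_apply]
  rw [Finset.sum_comm]

lemma comm_orth (S H : Mat3) (hS : Sᵀ = S) :
    ∑ i, ∑ j, S i j * (mcomm S H) i j = 0 := by
  rw [finner_sum, hS]
  unfold mcomm
  rw [Matrix.mul_sub, Matrix.trace_sub, ← Matrix.mul_assoc, ← Matrix.mul_assoc,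
    Matrix.trace_mul_cycle S H S]
  ring


lemma spectral_bounds (A : Mat3) (hA : A.IsHermitian)
    (lmin lmax : ℝ) (h1 : ∀ i, lmin ≤ hA.eigenvalues i) (h2 : ∀ i, hA.eigenvalues i ≤ lmax)
    (h3 : ∀ i, 0 ≤ hA.eigenvalues i) (v : Fin 3 → ℝ) :
    lmin * (∑ i, v i ^ 2) ≤ (∑ i, v i * A.mulVec v i) ∧
    (∑ i, (A.mulVec v i)^2) ≤ lmax^2 * (∑ i, v i ^2) := by
  have hAT : Aᵀ = A := hA
  set B := hA.eigenvectorBasis with hB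
  set x : EuclideanSpace ℝ (Fin 3) := (WithLp.equiv 2 _).symm v with hx
  set y : EuclideanSpace ℝ (Fin 3) := (WithLp.equiv 2 _).symm (A.mulVec v) with hy
  have hdc : ∀ i, B.repr y i = hA.eigenvalues i * B.repr x i := by
    intro i
    have hdi : B.repr y i = ∑ j, (B i : EuclideanSpace ℝ (Fin 3)) j * (A.mulVec v) j := by
      rw [B.repr_apply_apply]
      simp [PiLp.inner_apply, RCLike.inner_apply, hy, WithLp.equiv_symm_apply, PiLp.toLp_apply]
      exact Finset.sum_congr rfl fun _ _ => mul_comm _ _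
    have hci : B.repr x i = ∑ j, (B i : EuclideanSpace ℝ (Fin 3)) j * v j := by
      rw [B.repr_apply_apply]
      simp [PiLp.inner_apply, RCLike.inner_apply, hx, WithLp.equiv_symm_apply, PiLp.toLp_apply]
      exact Finset.sum_congr rfl fun _ _ => mul_comm _ _
    have key : (⇑(B i) : Fin 3 → ℝ) ⬝ᵥ (A *ᵥ v) = (A *ᵥ ⇑(B i)) ⬝ᵥ v := by
      rw [Matrix.dotProduct_mulVec, ← Matrix.vecMul_transpose, hAT]
    have key2 : (⇑(B i) : Fin 3 → ℝ) ⬝ᵥ (A *ᵥ v) = hA.eigenvalues i * (⇑(B i) ⬝ᵥ v) := by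
      rw [key, hA.mulVec_eigenvectorBasis i]
      simp [dotProduct, Finset.mul_sum, mul_assoc, ← hB]
    rw [hdi, hci]
    exact key2
  have hxy : ∑ i, v i * A.mulVec v i = ∑ i, B.repr x i * B.repr y i := by
    have h := B.repr.inner_map_map x y
    simp only [PiLp.inner_apply, RCLike.inner_apply, starRingEnd_apply, star_trivial] at h
    refine Eq.trans (Finset.sum_congr rfl fun i _ => ?_)
      (h.symm.trans (Finset.sum_congr rfl fun _ _ => mul_comm _ _))
    simp [hx, hy, WithLp.equiv_symm_apply, PiLp.toLp_apply, mul_comm]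
  have hyy : ∑ i, (A.mulVec v i)^2 = ∑ i, (B.repr y i)^2 := by
    have h := B.repr.inner_map_map y y
    simp only [PiLp.inner_apply, RCLike.inner_apply, starRingEnd_apply, star_trivial] at h
    simp only [← sq] at h
    refine Eq.trans (Finset.sum_congr rfl fun i _ => ?_) h.symm
    simp [hy, WithLp.equiv_symm_apply, PiLp.toLp_apply]
  have hxx : ∑ i, (v i)^2 = ∑ i, (B.repr x i)^2 := by
    have h := B.repr.inner_map_map x x
    simp only [PiLp.inner_apply, RCLike.inner_apply, starRingEnd_apply, star_trivial] at h
    simp only [← sq] at h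
    refine Eq.trans (Finset.sum_congr rfl fun i _ => ?_) h.symm
    simp [hx, WithLp.equiv_symm_apply, PiLp.toLp_apply]
  constructor
  · rw [hxy, hxx, Finset.mul_sum]
    apply Finset.sum_le_sum
    intro i _
    rw [hdc i]
    nlinarith [h1 i, sq_nonneg (B.repr x i)]
  · rw [hyy, hxx, Finset.mul_sum]
    apply Finset.sum_le_sum
    intro i _
    rw [hdc i]
    nlinarith [h2 i, h3 i, sq_nonneg (B.repr x i),
      mul_le_mul (h2 i) (h2 i) (h3 i) (le_trans (h3 i) (h2 i))]

end AuxLemmas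

set_option maxHeartbeats 2000000 in
/-- Proposition 4: the feedback `Δu = −k_P z − K_D ΔΩ − ε(z × Ω₀)` with
`0 < ε < min{√k_P, 4k_P λ_min(K_D)/(4k_P + λ_max(K_D)²)}` exponentially
stabilizes the origin of the linearized rigid body tracking error dynamics. -/
theorem prop4_exp_stabilization (ke : ℝ) (hke : 0 < ke)
    (Ω₀ : ℝ → Fin 3 → ℝ)
    (hΩ₀cont : ContinuousOn Ω₀ (Set.Ici 0))
    (hΩ₀bdd : ∃ M, ∀ t, 0 ≤ t → enorm3 (Ω₀ t) ≤ M)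
    (kP : ℝ) (hkP : 0 < kP) (KD : Mat3) (hKD : KD.PosDef)
    (lmin lmax : ℝ)
    (hlmin : IsLeast (Set.range hKD.1.eigenvalues) lmin)
    (hlmax : IsGreatest (Set.range hKD.1.eigenvalues) lmax)
    (ε : ℝ) (hε : 0 < ε)
    (hε' : ε < min (Real.sqrt kP) (4 * kP * lmin / (4 * kP + lmax ^ 2))) :
    ∃ C > (0:ℝ), ∃ lam > (0:ℝ),
      ∀ (Zs : ℝ → Mat3) (z ω : ℝ → Fin 3 → ℝ),
        (∀ t, 0 ≤ t → (Zs t)ᵀ = Zs t) →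
        (∀ t, 0 ≤ t →
          HasDerivAt Zs (mcomm (Zs t) (hat (Ω₀ t)) - (2 * ke) • Zs t) t) →
        (∀ t, 0 ≤ t → HasDerivAt z (cross (z t) (Ω₀ t) + ω t) t) →
        (∀ t, 0 ≤ t → HasDerivAt ω
          ((-kP) • z t - KD.mulVec (ω t) - ε • cross (z t) (Ω₀ t)) t) →
        ∀ t, 0 ≤ t →
          ‖Zs t‖ + enorm3 (z t) + enorm3 (ω t) ≤
            C * Real.exp (-lam * t) * (‖Zs 0‖ + enorm3 (z 0) + enorm3 (ω 0)) := by
  -- eigenvalue facts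
  have heigpos : ∀ i, 0 < hKD.1.eigenvalues i := fun i => hKD.eigenvalues_pos i
  have hminle : ∀ i, lmin ≤ hKD.1.eigenvalues i := fun i => hlmin.2 ⟨i, rfl⟩
  have hmaxle : ∀ i, hKD.1.eigenvalues i ≤ lmax := fun i => hlmax.2 ⟨i, rfl⟩
  have hlminpos : 0 < lmin := by
    obtain ⟨i, hi⟩ := hlmin.1
    exact hi ▸ heigpos i
  have hlmaxpos : 0 < lmax := lt_of_lt_of_le hlminpos (hlmax.2 hlmin.1)
  have hε2 : ε^2 < kP := (Real.lt_sqrt hε.le).1 (lt_of_lt_of_le hε' (min_le_left _ _))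
  have hεden : ε * (4*kP + lmax^2) < 4*kP*lmin := by
    have h := lt_of_lt_of_le hε' (min_le_right _ _)
    have hden : (0:ℝ) < 4*kP + lmax^2 := by positivity
    rw [lt_div_iff₀ hden] at h
    linarith
  have hγ : 0 < lmin - ε := by nlinarith [sq_nonneg lmax]
  have hα : 0 < ε * kP := mul_pos hε hkP
  have hδ : (ε*lmax)^2 < 4*(ε*kP)*(lmin - ε) := by
    nlinarith [mul_lt_mul_of_pos_left hεden hε]
  set μ := (4*(ε*kP)*(lmin-ε) - (ε*lmax)^2)/(4*(ε*kP+(lmin-ε))) with hμdef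
  have hμpos : 0 < μ := div_pos (by linarith) (by linarith)
  set c1 := (4*(kP/2)*(1/2) - ε^2)/(4*(kP/2+1/2)) with hc1def
  have hc1pos : 0 < c1 := by
    apply div_pos (by nlinarith) (by linarith)
  set c2 := (kP + 1 + ε)/2 with hc2def
  have hc2pos : 0 < c2 := by rw [hc2def]; linarith
  have hc1c2 : c1 ≤ c2 := by
    rw [hc1def, hc2def]
    rw [div_le_div_iff₀ (by linarith) (by norm_num)]
    nlinarith [sq_nonneg ε, hε.le]
  set kk := μ / c2 with hkkdef
  have hkkpos : 0 < kk := div_pos hμpos hc2pos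
  set lam := min (2*ke) (kk/2) with hlamdef
  have hlampos : 0 < lam := lt_min (by linarith) (by linarith)
  set C2 := Real.sqrt (2*c2/c1) with hC2def
  have hC2pos : 0 < C2 := Real.sqrt_pos.2 (by positivity)
  have hC2sq : C2^2 = 2*c2/c1 := Real.sq_sqrt (by positivity)
  refine ⟨1 + C2, by linarith, lam, hlampos, ?_⟩
  intro Zs z ω hsym hZ hz hw t ht
  -- Part A : the Zs bound
  set g : ℝ → ℝ := fun s => ∑ i, ∑ j, (Zs s i j)^2 with hgdef
  have hgnn : ∀ s, 0 ≤ g s := fun s =>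
    Finset.sum_nonneg fun i _ => Finset.sum_nonneg fun j _ => sq_nonneg _
  have hgdecay : ∀ s, 0 ≤ s → g s ≤ g 0 * Real.exp (-(4*ke)*s) := by
    apply exp_decay
    intro s hs
    set D := mcomm (Zs s) (hat (Ω₀ s)) - (2*ke) • Zs s with hD
    have hent : ∀ i j, HasDerivAt (fun r => Zs r i j) (D i j) s := fun i j =>
      hasDerivAt_entry (hZ s hs) i j
    have hder : HasDerivAt g (∑ i, ∑ j, 2 * Zs s i j * D i j) s := by
      have := HasDerivAt.fun_sum (fun i (_ : i ∈ Finset.univ) =>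
        HasDerivAt.fun_sum (fun j (_ : j ∈ Finset.univ) => ((hent i j).fun_pow 2)))
      simpa using this
    refine ⟨_, hder, le_of_eq ?_⟩
    have hzero : ∑ i, ∑ j, Zs s i j * (mcomm (Zs s) (hat (Ω₀ s))) i j = 0 :=
      comm_orth _ _ (hsym s hs)
    calc ∑ i, ∑ j, 2 * Zs s i j * D i j
        = ∑ i, ∑ j, (2*(Zs s i j * (mcomm (Zs s) (hat (Ω₀ s))) i j)
            - 4*ke*(Zs s i j)^2) := by
          refine Finset.sum_congr rfl fun i _ => Finset.sum_congr rfl fun j _ => ?_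
          rw [hD]
          simp only [Matrix.sub_apply, Matrix.smul_apply, smul_eq_mul]
          ring
      _ = 2*(∑ i, ∑ j, Zs s i j * (mcomm (Zs s) (hat (Ω₀ s))) i j)
            - 4*ke*(∑ i, ∑ j, (Zs s i j)^2) := by
          simp [Finset.sum_sub_distrib, Finset.mul_sum]
      _ = -(4*ke) * g s := by rw [hzero, hgdef]; ring
  have hZsbound : ‖Zs t‖ ≤ ‖Zs 0‖ * Real.exp (-(2*ke)*t) := by
    have h1 := hgdecay t ht
    have e1 : ‖Zs t‖ = Real.sqrt (g t) := frob_norm_eq _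
    have e0 : ‖Zs 0‖ = Real.sqrt (g 0) := frob_norm_eq _
    rw [e1, e0]
    have : Real.sqrt (g 0 * Real.exp (-(4*ke)*t))
        = Real.sqrt (g 0) * Real.exp (-(2*ke)*t) := by
      rw [Real.sqrt_mul (hgnn 0)]
      congr 1
      rw [show -(4*ke)*t = 2*(-(2*ke)*t) by ring]
      rw [show Real.exp (2*(-(2*ke)*t)) = Real.exp (-(2*ke)*t)^2 by
        rw [← Real.exp_nat_mul]; norm_num]
      exact Real.sqrt_sq (Real.exp_pos _).le
    rw [← this]
    exact Real.sqrt_le_sqrt h1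
  -- Part B : the (z, ω) bound
  set Sz : ℝ → ℝ := fun s => ∑ i, (z s i)^2 with hSzdef
  set Sw : ℝ → ℝ := fun s => ∑ i, (ω s i)^2 with hSwdef
  set Szw : ℝ → ℝ := fun s => ∑ i, z s i * ω s i with hSzwdef
  have hSznn : ∀ s, 0 ≤ Sz s := fun s => Finset.sum_nonneg fun i _ => sq_nonneg _
  have hSwnn : ∀ s, 0 ≤ Sw s := fun s => Finset.sum_nonneg fun i _ => sq_nonneg _
  set V : ℝ → ℝ := fun s => kP/2 * Sz s + 1/2 * Sw s + ε * Szw s with hVdef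
  have hVlow : ∀ s, c1 * (Sz s + Sw s) ≤ V s := by
    intro s
    have hcs : (Szw s)^2 ≤ Sz s * Sw s := cs3 (z s) (ω s)
    have hq : (-(ε * Szw s))^2 ≤ ε^2 * (Sz s * Sw s) := by
      have h2 : (-(ε * Szw s))^2 = ε^2 * (Szw s)^2 := by ring
      rw [h2]
      exact mul_le_mul_of_nonneg_left hcs (sq_nonneg ε)
    have := quad_key (kP/2) (1/2) ε (by linarith) (by norm_num)
      (by nlinarith) (Sz s) (Sw s) (-(ε * Szw s)) (hSznn s) (hSwnn s) hq
    rw [hVdef, hc1def]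
    linarith
  have hVup : ∀ s, V s ≤ c2 * (Sz s + Sw s) := by
    intro s
    have hcs : (Szw s)^2 ≤ Sz s * Sw s := cs3 (z s) (ω s)
    have hzw : Szw s ≤ (Sz s + Sw s)/2 := by
      nlinarith [hSznn s, hSwnn s, sq_nonneg (Sz s - Sw s)]
    have h3 : ε * Szw s ≤ ε * ((Sz s + Sw s)/2) := mul_le_mul_of_nonneg_left hzw hε.le
    rw [hVdef, hc2def]
    nlinarith [hSznn s, hSwnn s, mul_nonneg hε.le (hSznn s), mul_nonneg hε.le (hSwnn s)]
  have hVdecay : ∀ s, 0 ≤ s → V s ≤ V 0 * Real.exp (-kk*s) := by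
    apply exp_decay
    intro s hs
    set z' := cross (z s) (Ω₀ s) + ω s with hz'
    set w' := (-kP) • z s - KD.mulVec (ω s) - ε • cross (z s) (Ω₀ s) with hw'
    have hzi : ∀ i, HasDerivAt (fun r => z r i) (z' i) s :=
      fun i => hasDerivAt_comp_pi (hz s hs) i
    have hwi : ∀ i, HasDerivAt (fun r => ω r i) (w' i) s :=
      fun i => hasDerivAt_comp_pi (hw s hs) i
    have hd1 : HasDerivAt Sz (∑ i, 2 * z s i * z' i) s := by
      have := HasDerivAt.fun_sum (fun i (_ : i ∈ Finset.univ) => ((hzi i).fun_pow 2))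
      simpa using this
    have hd2 : HasDerivAt Sw (∑ i, 2 * ω s i * w' i) s := by
      have := HasDerivAt.fun_sum (fun i (_ : i ∈ Finset.univ) => ((hwi i).fun_pow 2))
      simpa using this
    have hd3 : HasDerivAt Szw (∑ i, (z' i * ω s i + z s i * w' i)) s :=
      HasDerivAt.fun_sum (fun i _ => ((hzi i).fun_mul (hwi i)))
    have hder : HasDerivAt V (kP/2 * (∑ i, 2 * z s i * z' i)
        + 1/2 * (∑ i, 2 * ω s i * w' i)
        + ε * (∑ i, (z' i * ω s i + z s i * w' i))) s :=
      ((hd1.const_mul (kP/2)).add (hd2.const_mul (1/2))).add (hd3.const_mul ε)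
    refine ⟨_, hder, ?_⟩
    set u := KD.mulVec (ω s) with hu
    have hE : kP/2 * (∑ i, 2 * z s i * z' i)
        + 1/2 * (∑ i, 2 * ω s i * w' i)
        + ε * (∑ i, (z' i * ω s i + z s i * w' i))
        = -(∑ i, ω s i * u i) + ε * Sw s - ε*kP*(Sz s) - ε*(∑ i, z s i * u i) := by
      rw [hz', hw', hSwdef, hSzdef]
      simp only [Pi.add_apply, Pi.sub_apply, Pi.smul_apply, smul_eq_mul,
        Fin.sum_univ_three, cross]
      simp only [Matrix.cons_val_zero, Matrix.cons_val_one, Matrix.head_cons,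
        Matrix.cons_val_two, Matrix.tail_cons]
      ring
    rw [hE]
    have hspec := spectral_bounds KD hKD.1 lmin lmax hminle hmaxle
      (fun i => (heigpos i).le) (ω s)
    have hwu : lmin * Sw s ≤ ∑ i, ω s i * u i := hspec.1
    have huu : ∑ i, (u i)^2 ≤ lmax^2 * Sw s := hspec.2
    have hzu2 : (∑ i, z s i * u i)^2 ≤ Sz s * (lmax^2 * Sw s) := by
      have h1 : (∑ i, z s i * u i)^2 ≤ Sz s * (∑ i, (u i)^2) := cs3 (z s) u
      exact le_trans h1 (mul_le_mul_of_nonneg_left huu (hSznn s))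
    have hq : (-(ε * (∑ i, z s i * u i)))^2 ≤ (ε*lmax)^2 * (Sz s * Sw s) := by
      calc (-(ε * (∑ i, z s i * u i)))^2 = ε^2 * (∑ i, z s i * u i)^2 := by ring
        _ ≤ ε^2 * (Sz s * (lmax^2 * Sw s)) := mul_le_mul_of_nonneg_left hzu2 (sq_nonneg ε)
        _ = (ε*lmax)^2 * (Sz s * Sw s) := by ring
    have hquad := quad_key (ε*kP) (lmin-ε) (ε*lmax) hα hγ hδ (Sz s) (Sw s)
      (-(ε * (∑ i, z s i * u i))) (hSznn s) (hSwnn s) hq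
    have hstep : -(∑ i, ω s i * u i) + ε * Sw s - ε*kP*(Sz s) - ε*(∑ i, z s i * u i)
        ≤ -μ * (Sz s + Sw s) := by
      rw [hμdef]
      linarith
    have hfin : -μ * (Sz s + Sw s) ≤ -kk * V s := by
      have h1 : kk * V s ≤ kk * (c2 * (Sz s + Sw s)) :=
        mul_le_mul_of_nonneg_left (hVup s) hkkpos.le
      have hkc : kk * c2 = μ := by
        rw [hkkdef]; exact div_mul_cancel₀ μ hc2pos.ne'
      have h2 : kk * (c2 * (Sz s + Sw s)) = μ * (Sz s + Sw s) := by
        rw [← hkc]; ring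
      linarith
    linarith
  -- assembling
  set a := enorm3 (z t) with ha
  set b := enorm3 (ω t) with hb
  set a0 := enorm3 (z 0) with ha0
  set b0 := enorm3 (ω 0) with hb0
  have hann : 0 ≤ a := Real.sqrt_nonneg _
  have hbnn : 0 ≤ b := Real.sqrt_nonneg _
  have ha0nn : 0 ≤ a0 := Real.sqrt_nonneg _
  have hb0nn : 0 ≤ b0 := Real.sqrt_nonneg _
  have hasq : a^2 = Sz t := Real.sq_sqrt (hSznn t)
  have hbsq : b^2 = Sw t := Real.sq_sqrt (hSwnn t)
  have ha0sq : a0^2 = Sz 0 := Real.sq_sqrt (hSznn 0)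
  have hb0sq : b0^2 = Sw 0 := Real.sq_sqrt (hSwnn 0)
  have hST : Sz t + Sw t ≤ (c2/c1) * (Sz 0 + Sw 0) * Real.exp (-kk*t) := by
    have h1 := hVlow t
    have h2 := hVdecay t ht
    have h3 : V 0 ≤ c2 * (Sz 0 + Sw 0) := hVup 0
    have hexp : (0:ℝ) < Real.exp (-kk*t) := Real.exp_pos _
    have h4 : V 0 * Real.exp (-kk*t) ≤ c2 * (Sz 0 + Sw 0) * Real.exp (-kk*t) :=
      mul_le_mul_of_nonneg_right h3 hexp.le
    have h5 : c1 * (Sz t + Sw t) ≤ c2 * (Sz 0 + Sw 0) * Real.exp (-kk*t) :=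
      le_trans h1 (le_trans h2 h4)
    rw [div_mul_eq_mul_div, div_mul_eq_mul_div, le_div_iff₀ hc1pos]
    linarith
  have habound : a + b ≤ C2 * Real.exp (-(kk/2)*t) * (a0 + b0) := by
    have hLsq : (a+b)^2 ≤ 2*(Sz t + Sw t) := by
      have h2ab : 2*(a*b) ≤ a^2 + b^2 := by
        have := two_mul_le_add_sq a b
        linarith [this]
      have e : (a+b)^2 = a^2 + b^2 + 2*(a*b) := by ring
      rw [e]
      linarith [h2ab, hasq.le, hasq.ge, hbsq.le, hbsq.ge]
    have hS0 : Sz 0 + Sw 0 ≤ (a0+b0)^2 := by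
      have h := mul_nonneg ha0nn hb0nn
      have e : (a0+b0)^2 = a0^2 + b0^2 + 2*(a0*b0) := by ring
      rw [e]
      linarith [h, ha0sq.le, ha0sq.ge, hb0sq.le, hb0sq.ge]
    have hexp2 : Real.exp (-(kk/2)*t)^2 = Real.exp (-kk*t) := by
      rw [← Real.exp_nat_mul]
      congr 1
      push_cast
      ring
    have hRsq : (a+b)^2 ≤ (C2 * Real.exp (-(kk/2)*t) * (a0+b0))^2 := by
      have hexp : (0:ℝ) < Real.exp (-kk*t) := Real.exp_pos _
      have key : (C2 * Real.exp (-(kk/2)*t) * (a0+b0))^2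
          = (2*c2/c1) * Real.exp (-kk*t) * (a0+b0)^2 := by
        rw [mul_pow, mul_pow, hC2sq, hexp2]
      rw [key]
      have h5 : 2*(Sz t + Sw t) ≤ 2*((c2/c1) * (Sz 0 + Sw 0) * Real.exp (-kk*t)) := by
        linarith [hST]
      have hco : (0:ℝ) ≤ 2*(c2/c1) := by positivity
      have h6 : (2*(c2/c1)*(Sz 0 + Sw 0)) * Real.exp (-kk*t)
          ≤ (2*(c2/c1)*(a0+b0)^2) * Real.exp (-kk*t) :=
        mul_le_mul_of_nonneg_right (mul_le_mul_of_nonneg_left hS0 hco) hexp.le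
      calc (a+b)^2 ≤ 2*(Sz t + Sw t) := hLsq
        _ ≤ 2*((c2/c1) * (Sz 0 + Sw 0) * Real.exp (-kk*t)) := h5
        _ = (2*(c2/c1)*(Sz 0 + Sw 0)) * Real.exp (-kk*t) := by ring
        _ ≤ (2*(c2/c1)*(a0+b0)^2) * Real.exp (-kk*t) := h6
        _ = (2*c2/c1) * Real.exp (-kk*t) * (a0+b0)^2 := by ring
    have hRnn : 0 ≤ C2 * Real.exp (-(kk/2)*t) * (a0+b0) := by positivity
    have habnn : 0 ≤ a + b := add_nonneg hann hbnn
    calc a + b = Real.sqrt ((a+b)^2) := (Real.sqrt_sq habnn).symm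
      _ ≤ Real.sqrt ((C2 * Real.exp (-(kk/2)*t) * (a0+b0))^2) := Real.sqrt_le_sqrt hRsq
      _ = C2 * Real.exp (-(kk/2)*t) * (a0+b0) := Real.sqrt_sq hRnn
  -- combine
  have hexpA : Real.exp (-(2*ke)*t) ≤ Real.exp (-lam*t) := by
    apply Real.exp_le_exp.2
    have h : -(2*ke) ≤ -lam := neg_le_neg (min_le_left _ _)
    exact mul_le_mul_of_nonneg_right h ht
  have hexpB : Real.exp (-(kk/2)*t) ≤ Real.exp (-lam*t) := by
    apply Real.exp_le_exp.2
    have h : -(kk/2) ≤ -lam := neg_le_neg (min_le_right _ _)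
    exact mul_le_mul_of_nonneg_right h ht
  have hZ0nn : (0:ℝ) ≤ ‖Zs 0‖ := norm_nonneg _
  have hexplam : (0:ℝ) < Real.exp (-lam*t) := Real.exp_pos _
  have hA2 : ‖Zs t‖ ≤ ‖Zs 0‖ * Real.exp (-lam*t) := by
    calc ‖Zs t‖ ≤ ‖Zs 0‖ * Real.exp (-(2*ke)*t) := hZsbound
      _ ≤ ‖Zs 0‖ * Real.exp (-lam*t) := mul_le_mul_of_nonneg_left hexpA hZ0nn
  have hB2 : a + b ≤ C2 * Real.exp (-lam*t) * (a0 + b0) := by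
    calc a + b ≤ C2 * Real.exp (-(kk/2)*t) * (a0 + b0) := habound
      _ ≤ C2 * Real.exp (-lam*t) * (a0 + b0) := by
          apply mul_le_mul_of_nonneg_right _ (add_nonneg ha0nn hb0nn)
          exact mul_le_mul_of_nonneg_left hexpB hC2pos.le
  calc ‖Zs t‖ + a + b
      = ‖Zs t‖ + (a + b) := by ring
    _ ≤ ‖Zs 0‖ * Real.exp (-lam*t) + C2 * Real.exp (-lam*t) * (a0+b0) :=
        add_le_add hA2 hB2
    _ ≤ (1 + C2) * Real.exp (-lam*t) * (‖Zs 0‖ + a0 + b0) := by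
        have h9 : 0 ≤ Real.exp (-lam*t) * (a0+b0) := by positivity
        have h10 : 0 ≤ C2 * (Real.exp (-lam*t) * ‖Zs 0‖) := by positivity
        have expand : (1 + C2) * Real.exp (-lam*t) * (‖Zs 0‖ + a0 + b0)
            = ‖Zs 0‖ * Real.exp (-lam*t) + C2 * Real.exp (-lam*t) * (a0+b0)
              + (Real.exp (-lam*t) * (a0+b0) + C2 * (Real.exp (-lam*t) * ‖Zs 0‖)) := by
          ring
        rw [expand]
        exact le_add_of_nonneg_right (add_nonneg h9 h10)


end
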